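/- Let 0 ≤ θ₁, θ₂, θ₃ ≤ π. The 3×3 real symmetric matrix C with unit diagonal and off-diagonal entries C₁₂ = cos θ₁, C₂₃ = cos θ₂, C₁₃ = cos θ₃ is positive semidefinite if and only if θ₁ ≤ θ₂ + θ₃, θ₂ ≤ θ₁ + θ₃, θ₃ ≤ θ₁ + θ₂, and θ₁ + θ₂ + θ₃ ≤ 2π. -/

import Mathlib

open Matrix Real

private lemma detnn_aux {a b c : ℝ}
    (h : (!![1,a,c;a,1,b;c,b,1] : Matrix (Fin 3) (Fin 3) ℝ).PosSemidef) :
    0 ≤ 1 + 2*a*b*c - a^2 - b^2 - c^2 := by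
  rcases lt_or_ge (a^2) 1 with hD | hD
  · have hq := h.dotProduct_mulVec_nonneg ![a*(b-a*c) - c*(1-a^2), -(b-a*c), 1-a^2]
    simp [dotProduct, Matrix.mulVec, Fin.sum_univ_three] at hq
    nlinarith [hq, hD, sq_nonneg (1-a^2)]
  · have hq1 := h.dotProduct_mulVec_nonneg ![1, -a, a*b - c]
    simp [dotProduct, Matrix.mulVec, Fin.sum_univ_three] at hq1
    have hq2 := h.dotProduct_mulVec_nonneg ![1, -a, 0]
    simp [dotProduct, Matrix.mulVec, Fin.sum_univ_three] at hq2
    nlinarith [hq1, hq2, hD, sq_nonneg (a*b - c), sq_nonneg a]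

private lemma psd_of_aux {a b c : ℝ} (ha : a^2 ≤ 1) (hb : b^2 ≤ 1) (hc : c^2 ≤ 1)
    (hd : 0 ≤ 1 + 2*a*b*c - a^2 - b^2 - c^2) :
    (!![1,a,c;a,1,b;c,b,1] : Matrix (Fin 3) (Fin 3) ℝ).PosSemidef := by
  refine Matrix.PosSemidef.of_dotProduct_mulVec_nonneg ?_ ?_
  · ext i j
    fin_cases i <;> fin_cases j <;>
      simp [Matrix.conjTranspose, Matrix.vecHead, Matrix.vecTail]
  · intro x
    have key : ∀ u v w : ℝ, 0 ≤ u^2 + v^2 + w^2 + 2*a*u*v + 2*b*v*w + 2*c*u*w := by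
      intro u v w
      rcases lt_or_ge (a^2) 1 with hD | hD
      · nlinarith [mul_nonneg (sub_nonneg.2 ha) (sq_nonneg (u + a*v + c*w)),
          sq_nonneg ((1-a^2)*v + (b-a*c)*w), mul_nonneg hd (sq_nonneg w), hD]
      · have ha1 : a^2 = 1 := le_antisymm ha hD
        have hb1 : b = a*c := by nlinarith [sq_nonneg (b - a*c)]
        subst hb1
        nlinarith [sq_nonneg (u + a*v + c*w), mul_nonneg (sub_nonneg.2 hc) (sq_nonneg w), ha1]
    have hq := key (x 0) (x 1) (x 2)
    simp [dotProduct, Matrix.mulVec, Fin.sum_univ_three]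
    nlinarith [hq]

private lemma cos_rev {x y : ℝ} (hx : x ∈ Set.Icc 0 π) (hy : y ∈ Set.Icc 0 π)
    (h : Real.cos x ≤ Real.cos y) : y ≤ x := by
  by_contra h'
  push_neg at h'
  exact absurd h (not_le.2 (Real.strictAntiOn_cos hx hy h'))

theorem stmt11 (θ₁ θ₂ θ₃ : ℝ)
    (h₁ : θ₁ ∈ Set.Icc 0 π) (h₂ : θ₂ ∈ Set.Icc 0 π) (h₃ : θ₃ ∈ Set.Icc 0 π) :
    (!![1, Real.cos θ₁, Real.cos θ₃;
        Real.cos θ₁, 1, Real.cos θ₂;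
        Real.cos θ₃, Real.cos θ₂, 1] : Matrix (Fin 3) (Fin 3) ℝ).PosSemidef ↔
      (θ₁ ≤ θ₂ + θ₃ ∧ θ₂ ≤ θ₁ + θ₃ ∧ θ₃ ≤ θ₁ + θ₂ ∧ θ₁ + θ₂ + θ₃ ≤ 2 * π) := by
  obtain ⟨h1l, h1u⟩ := h₁
  obtain ⟨h2l, h2u⟩ := h₂
  obtain ⟨h3l, h3u⟩ := h₃
  have hs2 : 0 ≤ Real.sin θ₂ := Real.sin_nonneg_of_nonneg_of_le_pi h2l h2u
  have hs3 : 0 ≤ Real.sin θ₃ := Real.sin_nonneg_of_nonneg_of_le_pi h3l h3u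
  have hpy2 := Real.sin_sq_add_cos_sq θ₂
  have hpy3 := Real.sin_sq_add_cos_sq θ₃
  constructor
  · intro hpsd
    have hdet := detnn_aux hpsd
    -- from det ≥ 0: cos(θ₂+θ₃) ≤ cos θ₁ ≤ cos(θ₂-θ₃)
    have hub : Real.cos θ₁ ≤ Real.cos (θ₂ - θ₃) := by
      rw [Real.cos_sub]
      nlinarith [hdet, hpy2, hpy3, mul_nonneg hs2 hs3]
    have hlb : Real.cos (θ₂ + θ₃) ≤ Real.cos θ₁ := by
      rw [Real.cos_add]
      nlinarith [hdet, hpy2, hpy3, mul_nonneg hs2 hs3]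
    have habs : |θ₂ - θ₃| ≤ θ₁ := by
      have : Real.cos θ₁ ≤ Real.cos |θ₂ - θ₃| := by rwa [Real.cos_abs]
      exact cos_rev ⟨h1l, h1u⟩ ⟨abs_nonneg _, by rw [abs_le]; constructor <;> linarith⟩ this
    rw [abs_le] at habs
    refine ⟨?_, by linarith [habs.1], by linarith [habs.2], ?_⟩
    · rcases le_or_gt (θ₂ + θ₃) π with hc | hc
      · exact cos_rev ⟨by linarith, hc⟩ ⟨h1l, h1u⟩ hlb
      · linarith
    · rcases le_or_gt (θ₂ + θ₃) π with hc | hc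
      · linarith
      · have h2pi : Real.cos (2*π - (θ₂ + θ₃)) ≤ Real.cos θ₁ := by
          rwa [Real.cos_two_pi_sub]
        have := cos_rev ⟨by linarith, by linarith [Real.pi_pos]⟩ ⟨h1l, h1u⟩ h2pi
        linarith
  · rintro ⟨t1, t2, t3, t4⟩
    apply psd_of_aux
    · nlinarith [Real.sin_sq_add_cos_sq θ₁, sq_nonneg (Real.sin θ₁)]
    · nlinarith [hpy2, sq_nonneg (Real.sin θ₂)]
    · nlinarith [hpy3, sq_nonneg (Real.sin θ₃)]
    · have hub : Real.cos θ₁ ≤ Real.cos (θ₂ - θ₃) := by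
        rw [← Real.cos_abs (θ₂ - θ₃)]
        apply Real.cos_le_cos_of_nonneg_of_le_pi (abs_nonneg _) h1u
        rw [abs_le]; constructor <;> linarith
      have hlb : Real.cos (θ₂ + θ₃) ≤ Real.cos θ₁ := by
        rcases le_or_gt (θ₂ + θ₃) π with hc | hc
        · exact Real.cos_le_cos_of_nonneg_of_le_pi h1l hc t1
        · rw [← Real.cos_two_pi_sub]
          exact Real.cos_le_cos_of_nonneg_of_le_pi h1l (by linarith [Real.pi_pos])
            (by linarith)
      rw [Real.cos_sub] at hub
      rw [Real.cos_add] at hlb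
      nlinarith [hub, hlb, hpy2, hpy3, mul_nonneg hs2 hs3]
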